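/- Let ν be a Borel probability measure on [0,1]^d, λ ≥ 0, c ∈ ℝ, and f(x) = c + λ·ν([0,x]). Let P_n = {x_0,…,x_{n-1}} ⊂ [0,1]^d be such that the reflected set {1−x_0,…,1−x_{n-1}} has non-negative local discrepancy (δ(z) ≥ 0 for all z). Then (1/n)∑_{i=0}^{n-1} f(x_i) ≥ ∫_{[0,1]^d} f(x) dx. -/

import Mathlib

open MeasureTheory
open scoped ENNReal

/-- If `f(x) = c + λ·ν([0,x])` for a Borel probability measure `ν` on `[0,1]^d` and `λ ≥ 0`,
and the reflected point set `{1 - x_i}` has non-negative local discrepancy, then the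
equal-weight rule at the `x_i` gives an upper bound for `∫_{[0,1]^d} f`. -/
theorem stmt3 (d n : ℕ) (hn : 0 < n)
    (ν : Measure (Fin d → ℝ)) [IsProbabilityMeasure ν]
    (hνsupp : ν (Set.Icc (0 : Fin d → ℝ) 1)ᶜ = 0)
    (lam c : ℝ) (hlam : 0 ≤ lam)
    (f : (Fin d → ℝ) → ℝ)
    (hf : ∀ x, f x = c + lam * (ν (Set.Icc 0 x)).toReal)
    (x : Fin n → Fin d → ℝ) (hx : ∀ i j, x i j ∈ Set.Icc (0:ℝ) 1)
    (hnnld : ∀ z : Fin d → ℝ, (∀ j, z j ∈ Set.Icc (0:ℝ) 1) →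
      ∏ j, z j ≤ (Nat.card {i : Fin n // ∀ j, 1 - x i j < z j} : ℝ) / n) :
    ∫ y in Set.Icc (0 : Fin d → ℝ) 1, f y ≤ (1 / n : ℝ) * ∑ i, f (x i) := by
  classical
  set I : Set (Fin d → ℝ) := Set.Icc 0 1 with hIdef
  have hnR : (0:ℝ) < n := by exact_mod_cast hn
  set S : Set ((Fin d → ℝ) × (Fin d → ℝ)) := {p | p.2 ∈ Set.Icc 0 p.1} with hSdef
  have hS : MeasurableSet S := by
    have : S = ⋂ j : Fin d, {p : (Fin d → ℝ) × (Fin d → ℝ) | 0 ≤ p.2 j ∧ p.2 j ≤ p.1 j} := by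
      ext p
      simp [hSdef, Set.mem_Icc, Pi.le_def, forall_and]
    rw [this]
    refine MeasurableSet.iInter fun j => ?_
    exact (measurableSet_le measurable_const ((measurable_pi_apply j).comp measurable_snd)).inter
      (measurableSet_le ((measurable_pi_apply j).comp measurable_snd)
        ((measurable_pi_apply j).comp measurable_fst))
  have hpre : ∀ y : Fin d → ℝ, Prod.mk y ⁻¹' S = Set.Icc 0 y := fun y => rfl
  have hmeasI : MeasurableSet I := measurableSet_Icc
  have hvolI : volume I = 1 := by
    rw [hIdef, Real.volume_Icc_pi]; simp
  have hmeasg : Measurable fun y => ν (Set.Icc 0 y) := by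
    have := measurable_measure_prodMk_left (ν := ν) hS
    simpa [hpre] using this
  have hgle : ∀ y, ν (Set.Icc 0 y) ≤ 1 := fun y => prob_le_one
  have hA_le : ∫⁻ y in I, ν (Set.Icc 0 y) ≤ 1 := by
    calc ∫⁻ y in I, ν (Set.Icc 0 y) ≤ ∫⁻ _ in I, 1 := lintegral_mono fun y => hgle y
    _ = volume I := by simp
    _ = 1 := hvolI
  have hA_ne : ∫⁻ y in I, ν (Set.Icc 0 y) ≠ ⊤ :=
    (lt_of_le_of_lt hA_le ENNReal.one_lt_top).ne
  -- key ENNReal inequality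
  have key : ∫⁻ y in I, ν (Set.Icc 0 y) ≤ (n : ℝ≥0∞)⁻¹ * ∑ i, ν (Set.Icc 0 (x i)) := by
    have h1 : ∫⁻ y in I, ν (Set.Icc 0 y) = ((volume.restrict I).prod ν) S := by
      rw [Measure.prod_apply hS]
      simp [hpre]
    have h2 : ((volume.restrict I).prod ν) S
        = ∫⁻ t, (volume.restrict I) ((fun y => (y, t)) ⁻¹' S) ∂ν :=
      Measure.prod_apply_symm hS
    rw [h1, h2]
    have haeI : ∀ᵐ t ∂ν, t ∈ I := by
      rw [ae_iff]
      exact hνsupp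
    have hbound : ∀ᵐ t ∂ν, (volume.restrict I) ((fun y => (y, t)) ⁻¹' S)
        ≤ (n : ℝ≥0∞)⁻¹ * ∑ i, (Set.Icc (0 : Fin d → ℝ) (x i)).indicator 1 t := by
      filter_upwards [haeI] with t ht
      have ht0 : (0 : Fin d → ℝ) ≤ t := ht.1
      have ht1 : t ≤ (1 : Fin d → ℝ) := ht.2
      have ht0' : ∀ j, (0:ℝ) ≤ t j := fun j => ht0 j
      have ht1' : ∀ j, t j ≤ (1:ℝ) := fun j => ht1 j
      have hslice : I ∩ {y : Fin d → ℝ | t ∈ Set.Icc 0 y} = Set.Icc t 1 := by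
        ext y
        simp only [Set.mem_inter_iff, Set.mem_Icc, Set.mem_setOf_eq, hIdef]
        constructor
        · rintro ⟨⟨_, hy1⟩, _, hty⟩; exact ⟨hty, hy1⟩
        · rintro ⟨hty, hy1⟩; exact ⟨⟨le_trans ht0 hty, hy1⟩, ht0, hty⟩
      have hslice' : (fun y => (y, t)) ⁻¹' S = {y : Fin d → ℝ | t ∈ Set.Icc 0 y} := rfl
      rw [hslice', Measure.restrict_apply' hmeasI, Set.inter_comm, hslice,
        Real.volume_Icc_pi]
      have hz : ∀ j, (1 - t j) ∈ Set.Icc (0:ℝ) 1 := fun j =>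
        ⟨by linarith [ht1' j], by linarith [ht0' j]⟩
      have hcard := hnnld (fun j => 1 - t j) hz
      set T : Finset (Fin n) := Finset.univ.filter (fun i => t ∈ Set.Icc 0 (x i)) with hT
      have hsubN : Nat.card {i : Fin n // ∀ j, 1 - x i j < 1 - t j} ≤ T.card := by
        rw [Nat.card_eq_fintype_card, hT, ← Fintype.card_subtype]
        refine Fintype.card_subtype_mono _ _ fun i hi => ?_
        exact ⟨ht0, fun j => by have h4 := hi j; linarith⟩
      have hsub : (Nat.card {i : Fin n // ∀ j, 1 - x i j < 1 - t j} : ℝ) ≤ T.card := by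
        exact_mod_cast hsubN
      have hreal : ∏ j, (1 - t j) ≤ (T.card : ℝ) / n := hcard.trans (by gcongr)
      have hsum : ∑ i, (Set.Icc (0 : Fin d → ℝ) (x i)).indicator
            (1 : (Fin d → ℝ) → ℝ≥0∞) t = (T.card : ℝ≥0∞) := by
        have h3 : ∀ i : Fin n, (Set.Icc (0 : Fin d → ℝ) (x i)).indicator
            (1 : (Fin d → ℝ) → ℝ≥0∞) t
            = if t ∈ Set.Icc (0 : Fin d → ℝ) (x i) then 1 else 0 := fun i => by
          by_cases h : t ∈ Set.Icc (0 : Fin d → ℝ) (x i) <;> simp [h]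
        rw [Finset.sum_congr rfl fun i _ => h3 i, hT, Finset.card_filter]
        push_cast
        exact Finset.sum_congr rfl fun i _ => if_congr Iff.rfl rfl rfl
      calc ∏ j, ENNReal.ofReal ((1 : Fin d → ℝ) j - t j)
          = ENNReal.ofReal (∏ j, (1 - t j)) := by
            rw [ENNReal.ofReal_prod_of_nonneg fun j _ => by linarith [(hz j).1]]
            simp
        _ ≤ ENNReal.ofReal ((T.card : ℝ) / n) := ENNReal.ofReal_le_ofReal hreal
        _ = (n : ℝ≥0∞)⁻¹ * (T.card : ℝ≥0∞) := by
            rw [ENNReal.ofReal_div_of_pos hnR, ENNReal.ofReal_natCast,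
              ENNReal.ofReal_natCast, div_eq_mul_inv, mul_comm]
        _ = (n : ℝ≥0∞)⁻¹ * ∑ i, (Set.Icc (0 : Fin d → ℝ) (x i)).indicator 1 t := by
            rw [hsum]
    calc ∫⁻ t, (volume.restrict I) ((fun y => (y, t)) ⁻¹' S) ∂ν
        ≤ ∫⁻ t, (n : ℝ≥0∞)⁻¹ * ∑ i, (Set.Icc (0 : Fin d → ℝ) (x i)).indicator 1 t ∂ν :=
          lintegral_mono_ae hbound
      _ = (n : ℝ≥0∞)⁻¹ * ∑ i, ν (Set.Icc 0 (x i)) := by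
          rw [lintegral_const_mul']
          · congr 1
            rw [lintegral_finset_sum]
            · exact Finset.sum_congr rfl fun i _ => lintegral_indicator_one measurableSet_Icc
            · exact fun i _ => (measurable_one.indicator measurableSet_Icc)
          · simp [hn.ne']
  -- back to real integrals
  have hfin : (n : ℝ≥0∞)⁻¹ * ∑ i, ν (Set.Icc 0 (x i)) ≠ ⊤ := by
    apply ENNReal.mul_ne_top
    · simp [hn.ne']
    · exact (ENNReal.sum_lt_top.mpr fun i _ => measure_lt_top ν _).ne
  have hint_g : Integrable (fun y => (ν (Set.Icc 0 y)).toReal) (volume.restrict I) :=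
    integrable_toReal_of_lintegral_ne_top hmeasg.aemeasurable hA_ne
  have hIg : ∫ y in I, (ν (Set.Icc 0 y)).toReal = (∫⁻ y in I, ν (Set.Icc 0 y)).toReal :=
    integral_toReal hmeasg.aemeasurable
      (Filter.Eventually.of_forall fun y => lt_of_le_of_lt (hgle y) ENNReal.one_lt_top)
  have hgineq : ∫ y in I, (ν (Set.Icc 0 y)).toReal
      ≤ (1 / n : ℝ) * ∑ i, (ν (Set.Icc 0 (x i))).toReal := by
    rw [hIg]
    refine le_trans (ENNReal.toReal_mono hfin key) (le_of_eq ?_)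
    rw [ENNReal.toReal_mul, ENNReal.toReal_sum (fun i _ => measure_ne_top ν _)]
    congr 1
    rw [ENNReal.toReal_inv]
    simp [one_div]
  -- split the integral of f
  have hfinmeas : IsFiniteMeasure (volume.restrict I) :=
    ⟨by rw [Measure.restrict_apply_univ, hvolI]; exact ENNReal.one_lt_top⟩
  have hLHS : ∫ y in I, f y
      = c + lam * ∫ y in I, (ν (Set.Icc 0 y)).toReal := by
    simp only [hf]
    rw [integral_add (integrable_const c) (hint_g.const_mul lam),
      integral_const, integral_const_mul]
    simp [Measure.restrict_apply_univ, measureReal_def, hvolI]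
  have hRHS : (1 / n : ℝ) * ∑ i, f (x i)
      = c + lam * ((1 / n : ℝ) * ∑ i, (ν (Set.Icc 0 (x i))).toReal) := by
    simp only [hf, Finset.sum_add_distrib, Finset.sum_const, Finset.card_univ,
      Fintype.card_fin, nsmul_eq_mul, ← Finset.mul_sum]
    field_simp
  rw [hLHS, hRHS]
  exact add_le_add_right (mul_le_mul_of_nonneg_left hgineq hlam) c
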